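/- A complex number λ belongs to the resolvent set of 𝒜 if and only if the bounded operator I + λA₀⁻¹(D + λI) on H_{1/2} is boundedly invertible. -/

import Mathlib

open scoped InnerProductSpace ComplexConjugate
open Filter

/-- Abstract setup for the second order equation `z̈ + A₀ z + D ż = 0`:
`Hhalf` plays the role of `H_{1/2} = 𝒟(A₀^{1/2})` with the norm `‖A₀^{1/2}·‖`, `H` is the
pivot Hilbert space and `Hm` is the dual `H_{-1/2}`; `ι : H_{1/2} → H` and `j : H → H_{-1/2}`
are the (dense, injective, continuous) inclusions; the uniformly positive self-adjoint
operator `A₀` induces an isometric isomorphism `A₀ : H_{1/2} → H_{-1/2}`; the damping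
operator `D : H_{1/2} → H_{-1/2}` is bounded, and `A₀^{-1/2} D A₀^{-1/2}` is self-adjoint
nonnegative, expressed via the duality pairing
`⟨u, z⟩_{H_{-1/2}×H_{1/2}} = ⟪A₀⁻¹ u, z⟫_{H_{1/2}}`. -/
structure BeamSetup (Hhalf H Hm : Type*)
    [NormedAddCommGroup Hhalf] [InnerProductSpace ℂ Hhalf] [CompleteSpace Hhalf]
    [NormedAddCommGroup H] [InnerProductSpace ℂ H] [CompleteSpace H]
    [NormedAddCommGroup Hm] [InnerProductSpace ℂ Hm] [CompleteSpace Hm] : Type _ where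
  ι : Hhalf →L[ℂ] H
  ι_inj : Function.Injective ι
  ι_dense : DenseRange ι
  j : H →L[ℂ] Hm
  j_inj : Function.Injective j
  A₀ : Hhalf ≃ₗᵢ[ℂ] Hm
  compat : ∀ (y : H) (z : Hhalf), ⟪A₀.symm (j y), z⟫_ℂ = ⟪y, ι z⟫_ℂ
  D : Hhalf →L[ℂ] Hm
  D_symm : ∀ z w : Hhalf, ⟪A₀.symm (D z), w⟫_ℂ = ⟪z, A₀.symm (D w)⟫_ℂ
  D_nonneg : ∀ z : Hhalf, 0 ≤ (⟪A₀.symm (D z), z⟫_ℂ).re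

namespace BeamSetup

variable {Hhalf H Hm : Type*}
    [NormedAddCommGroup Hhalf] [InnerProductSpace ℂ Hhalf] [CompleteSpace Hhalf]
    [NormedAddCommGroup H] [InnerProductSpace ℂ H] [CompleteSpace H]
    [NormedAddCommGroup Hm] [InnerProductSpace ℂ Hm] [CompleteSpace Hm]
    (S : BeamSetup Hhalf H Hm)

/-- `A₀⁻¹ : H_{-1/2} → H_{1/2}` as a continuous linear map. -/
noncomputable def Ai : Hm →L[ℂ] Hhalf :=
  (S.A₀.symm.toContinuousLinearEquiv : Hm ≃L[ℂ] Hhalf)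

/-- `A₀⁻¹ D` as a bounded operator on `H_{1/2}`. -/
noncomputable def T : Hhalf →L[ℂ] Hhalf := S.Ai.comp S.D

/-- `A₀⁻¹ : H → H_{1/2}`. -/
noncomputable def Ainv : H →L[ℂ] Hhalf := S.Ai.comp S.j

/-- `A₀⁻¹` considered as a bounded operator on `H_{1/2}`. -/
noncomputable def AinvR : Hhalf →L[ℂ] Hhalf := S.Ainv.comp S.ι

/-- `A₀⁻¹` considered as a bounded operator on `H`. -/
noncomputable def AinvH : H →L[ℂ] H := S.ι.comp S.Ainv

/-- `λ` is an eigenvalue of the operator matrix `𝒜 = [[0, I], [-A₀, -D]]` with domain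
`𝒟(𝒜) = {(z,w) ∈ H_{1/2} × H_{1/2} : A₀ z + D w ∈ H}`: there is a nonzero
`(z, ι w) ∈ 𝒟(𝒜)` (the domain condition being `j y = A₀ z + D w`, so that
`𝒜 (z, ι w) = (w, -y)`) with `𝒜 (z, ι w) = λ • (z, ι w)`. -/
def IsEigenvalue (lam : ℂ) : Prop :=
  ∃ (z w : Hhalf) (y : H), S.j y = S.A₀ z + S.D w ∧
    ((z, S.ι w) : Hhalf × H) ≠ 0 ∧ w = lam • z ∧ -y = lam • S.ι w

/-- `λ` belongs to the resolvent set of `𝒜`: there is a bounded operator `R` on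
`H_{1/2} × H` mapping onto `𝒟(𝒜)` which inverts `𝒜 - λ` from both sides. -/
def InResolvent (lam : ℂ) : Prop :=
  ∃ R : (Hhalf × H) →L[ℂ] (Hhalf × H),
    (∀ q : Hhalf × H, ∃ (z w : Hhalf) (y : H),
        R q = (z, S.ι w) ∧ S.j y = S.A₀ z + S.D w ∧
        ((w, -y) : Hhalf × H) - lam • ((z, S.ι w) : Hhalf × H) = q) ∧
    (∀ (z w : Hhalf) (y : H), S.j y = S.A₀ z + S.D w →
        R (((w, -y) : Hhalf × H) - lam • ((z, S.ι w) : Hhalf × H)) = (z, S.ι w))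


end BeamSetup

open BeamSetup

namespace BeamSetup

variable {Hhalf H Hm : Type*}
    [NormedAddCommGroup Hhalf] [InnerProductSpace ℂ Hhalf] [CompleteSpace Hhalf]
    [NormedAddCommGroup H] [InnerProductSpace ℂ H] [CompleteSpace H]
    [NormedAddCommGroup Hm] [InnerProductSpace ℂ Hm] [CompleteSpace Hm]
    (S : BeamSetup Hhalf H Hm)

lemma Ainv_apply' (y : H) : S.Ainv y = S.A₀.symm (S.j y) := rfl

lemma T_apply' (z : Hhalf) : S.T z = S.A₀.symm (S.D z) := rfl

lemma jy_iff (y : H) (z w : Hhalf) :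
    S.j y = S.A₀ z + S.D w ↔ S.Ainv y = z + S.T w := by
  constructor
  · intro h
    rw [Ainv_apply', h, map_add, LinearIsometryEquiv.symm_apply_apply, T_apply']
  · intro h
    have h2 := congrArg S.A₀ h
    rw [Ainv_apply', LinearIsometryEquiv.apply_symm_apply, map_add, T_apply',
      LinearIsometryEquiv.apply_symm_apply] at h2
    exact h2

end BeamSetup

/-- `λ` belongs to the resolvent set of `𝒜` if and only if the bounded
operator `I + λ A₀⁻¹ (D + λ I)` on `H_{1/2}` is boundedly invertible. -/
theorem statement4 {Hhalf H Hm : Type*}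
    [NormedAddCommGroup Hhalf] [InnerProductSpace ℂ Hhalf] [CompleteSpace Hhalf]
    [NormedAddCommGroup H] [InnerProductSpace ℂ H] [CompleteSpace H]
    [NormedAddCommGroup Hm] [InnerProductSpace ℂ Hm] [CompleteSpace Hm]
    (S : BeamSetup Hhalf H Hm) (lam : ℂ) :
    S.InResolvent lam ↔
      IsUnit ((1 : Hhalf →L[ℂ] Hhalf) + lam • (S.T + lam • S.AinvR)) := by
    classical
  rw [ContinuousLinearMap.isUnit_iff_bijective]
  set M : Hhalf →L[ℂ] Hhalf := S.T + lam • S.AinvR with hMdef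
  set L : Hhalf →L[ℂ] Hhalf := 1 + lam • M with hLdef
  have hMapp : ∀ x : Hhalf, M x = S.T x + lam • S.AinvR x := by
    intro x; simp [hMdef]
  have hLapp : ∀ x : Hhalf, L x = x + lam • M x := by
    intro x; simp [hLdef]
  have hAι : ∀ x : Hhalf, S.Ainv (S.ι x) = S.AinvR x := fun _ => rfl
  constructor
  · rintro ⟨R, h1, h2⟩
    constructor
    · -- injectivity of L
      have key : ∀ z : Hhalf, L z = 0 → z = 0 := by
        intro z hz
        have h0 : z + lam • S.T z + (lam * lam) • S.AinvR z = 0 := by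
          have h := hLapp z
          rw [hz, hMapp] at h
          calc z + lam • S.T z + (lam * lam) • S.AinvR z
              = z + lam • (S.T z + lam • S.AinvR z) := by module
            _ = 0 := h.symm
        have hc : S.j (-((lam * lam) • S.ι z)) = S.A₀ z + S.D (lam • z) := by
          rw [S.jy_iff]
          rw [map_neg, map_smul, hAι, map_smul]
          exact neg_eq_of_add_eq_zero_left h0
        have h3 := h2 z (lam • z) (-((lam * lam) • S.ι z)) hc
        have harg : ((lam • z, -(-((lam * lam) • S.ι z))) : Hhalf × H)
            - lam • ((z, S.ι (lam • z)) : Hhalf × H) = 0 := by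
          ext
          · simp
          · simp [map_smul, smul_smul]
        rw [harg, map_zero] at h3
        have := congrArg Prod.fst h3
        simpa using this.symm
      intro a b hab
      have := key (a - b) (by rw [map_sub, hab, sub_self])
      exact sub_eq_zero.mp this
    · -- surjectivity of L
      intro ζ
      obtain ⟨z, w, y, hR, hj, heq⟩ := h1 (ζ, 0)
      have h1c : w - lam • z = ζ := by
        have := congrArg Prod.fst heq; simpa using this
      have h2c : -y - lam • S.ι w = 0 := by
        have := congrArg Prod.snd heq; simpa using this
      have hy : y = -(lam • S.ι w) := by
        exact neg_eq_iff_eq_neg.mp (sub_eq_zero.mp h2c)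
      have hA : S.Ainv y = z + S.T w := (S.jy_iff y z w).mp hj
      have hAy : -(lam • S.AinvR w) = z + S.T w := by
        rw [← hA, hy, map_neg, map_smul, hAι]
      have hzval : z = -(lam • S.AinvR w) - S.T w := by
        rw [hAy]; abel
      refine ⟨w, ?_⟩
      rw [hLapp w, hMapp w, ← h1c, hzval]
      module
  · -- converse: L bijective → resolvent
    intro hbij
    have hker : L.ker = ⊥ := LinearMap.ker_eq_bot.mpr hbij.1
    have hrange : L.range = ⊤ := LinearMap.range_eq_top.mpr hbij.2
    set e : Hhalf ≃L[ℂ] Hhalf := ContinuousLinearEquiv.ofBijective L hker hrange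
      with hedef
    have hLi1 : ∀ x : Hhalf, e.symm (L x) = x := fun x =>
      ContinuousLinearEquiv.ofBijective_symm_apply_apply L _ _ x
    have hLi2 : ∀ x : Hhalf, L (e.symm x) = x := fun x =>
      ContinuousLinearEquiv.ofBijective_apply_symm_apply L _ _ x
    set Li : Hhalf →L[ℂ] Hhalf := (e.symm : Hhalf →L[ℂ] Hhalf) with hLidef
    set W : (Hhalf × H) →L[ℂ] Hhalf :=
      Li.comp (ContinuousLinearMap.fst ℂ Hhalf H
        - lam • (S.Ainv.comp (ContinuousLinearMap.snd ℂ Hhalf H))) with hWdef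
    set Z : (Hhalf × H) →L[ℂ] Hhalf :=
      -(M.comp W) - S.Ainv.comp (ContinuousLinearMap.snd ℂ Hhalf H) with hZdef
    have hW : ∀ q : Hhalf × H, W q = e.symm (q.1 - lam • S.Ainv q.2) := by
      intro q; simp [hWdef, hLidef]
    have hZ : ∀ q : Hhalf × H, Z q = -(M (W q)) - S.Ainv q.2 := by
      intro q; simp [hZdef]
    refine ⟨Z.prod (S.ι.comp W), ?_, ?_⟩
    · intro q
      refine ⟨Z q, W q, -(lam • S.ι (W q) + q.2), rfl, ?_, ?_⟩
      · rw [S.jy_iff]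
        rw [map_neg, map_add, map_smul, hAι, hZ, hMapp]
        module
      · have hLW : L (W q) = q.1 - lam • S.Ainv q.2 := by
          rw [hW]; exact hLi2 _
        have h5 : W q + lam • M (W q) = q.1 - lam • S.Ainv q.2 := by
          rw [← hLapp (W q)]; exact hLW
        have h6 : W q + lam • M (W q) + lam • S.Ainv q.2 = q.1 := by
          rw [h5]; abel
        ext
        · show W q - lam • Z q = q.1
          rw [hZ, ← h6]; module
        · show -(-(lam • S.ι (W q) + q.2)) - lam • S.ι (W q) = q.2
          abel
    · intro z w y hj
      have hA : S.Ainv y = z + S.T w := (S.jy_iff y z w).mp hj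
      set q : Hhalf × H := ((w, -y) : Hhalf × H) - lam • ((z, S.ι w) : Hhalf × H)
        with hqdef
      have hq1 : q.1 = w - lam • z := rfl
      have hq2 : q.2 = -y - lam • S.ι w := rfl
      have hkey : q.1 - lam • S.Ainv q.2 = L w := by
        rw [hq1, hq2, map_sub, map_neg, map_smul, hAι, hA, hLapp w, hMapp w]
        module
      have hWq : W q = w := by
        rw [hW, hkey]; exact hLi1 w
      have hZq : Z q = z := by
        rw [hZ, hWq, hMapp, hq2, map_sub, map_neg, map_smul, hAι, hA]
        module
      show (Z q, S.ι (W q)) = (z, S.ι w)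
      rw [hZq, hWq]
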